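/- For all real numbers a > 0 and b > 0, the function f(ε) = ∫_0^∞ e^{-t} log(1 + a(b − ε)t/(1 + aε)) dt is convex on the interval [0, b]. -/

import Mathlib

open MeasureTheory Real Set Filter Topology

section aux

lemma hasDerivAt_phi {y : ℝ} (hy : (0:ℝ) < 1 + y) :
    HasDerivAt (fun y => y * Real.exp y / (1 + y))
      (Real.exp y * (y^2 + y + 1) / (1 + y)^2) y := by
  have h1 : HasDerivAt (fun y : ℝ => y * Real.exp y) (1 * Real.exp y + y * Real.exp y) y :=
    (hasDerivAt_id y).mul (Real.hasDerivAt_exp y)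
  have h2 : HasDerivAt (fun y : ℝ => 1 + y) (0 + 1) y :=
    (hasDerivAt_const y 1).add (hasDerivAt_id y)
  have h := h1.div h2 (ne_of_gt hy)
  refine h.congr_deriv ?_
  field_simp
  ring

lemma hasDerivAt_phi1 {y : ℝ} (hy : (0:ℝ) < 1 + y) :
    HasDerivAt (fun y => Real.exp y * (y^2 + y + 1) / (1 + y)^2)
      (Real.exp y * (y^3 + 2*y^2 + 3*y) / (1 + y)^3) y := by
  have hnum : HasDerivAt (fun y : ℝ => Real.exp y * (y^2 + y + 1))
      (Real.exp y * (y^2 + y + 1) + Real.exp y * ((2:ℕ) * y^(2-1) + 1 + 0)) y := by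
    exact (Real.hasDerivAt_exp y).mul
      ((((hasDerivAt_pow 2 y).add (hasDerivAt_id y)).add (hasDerivAt_const y 1)))
  have h2 : HasDerivAt (fun y : ℝ => 1 + y) (0 + 1) y :=
    (hasDerivAt_const y 1).add (hasDerivAt_id y)
  have hden : HasDerivAt (fun y : ℝ => (1 + y)^2) (2 * (1+y)^(2-1) * (0+1)) y := h2.pow 2
  have h := hnum.div hden (pow_ne_zero 2 (ne_of_gt hy))
  refine h.congr_deriv ?_
  field_simp
  ring

lemma convexOn_phi : ConvexOn ℝ (Set.Ici (0:ℝ)) (fun y => y * Real.exp y / (1 + y)) := by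
  apply convexOn_of_hasDerivWithinAt2_nonneg (convex_Ici 0)
      (f' := fun y => Real.exp y * (y^2 + y + 1) / (1 + y)^2)
      (f'' := fun y => Real.exp y * (y^3 + 2*y^2 + 3*y) / (1 + y)^3)
  · apply ContinuousOn.div
    · fun_prop
    · fun_prop
    · intro y hy
      have : (0:ℝ) ≤ y := hy
      positivity
  · intro y hy
    rw [interior_Ici] at hy
    exact (hasDerivAt_phi (by simp at hy; linarith)).hasDerivWithinAt
  · intro y hy
    rw [interior_Ici] at hy
    exact (hasDerivAt_phi1 (by simp at hy; linarith)).hasDerivWithinAt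
  · intro y hy
    rw [interior_Ici] at hy
    simp only [mem_Ioi] at hy
    positivity

lemma texp_le {t : ℝ} (ht : 0 ≤ t) : t * Real.exp (-t) ≤ Real.exp (-(1/2*t)) := by
  have h1 : 1 + t/4 ≤ Real.exp (t/4) := by
    have := Real.add_one_le_exp (t/4); linarith
  have h2 : t ≤ (1 + t/4)^2 := by nlinarith [sq_nonneg (1 - t/4)]
  have h3 : t ≤ (Real.exp (t/4))^2 := by nlinarith [Real.exp_pos (t/4)]
  have h4 : (Real.exp (t/4))^2 = Real.exp (t/2) := by
    rw [pow_two, ← Real.exp_add]; ring_nf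
  have h5 : t ≤ Real.exp (t/2) := h4 ▸ h3
  calc t * Real.exp (-t) ≤ Real.exp (t/2) * Real.exp (-t) :=
        mul_le_mul_of_nonneg_right h5 (Real.exp_pos _).le
    _ = Real.exp (-(1/2*t)) := by rw [← Real.exp_add]; ring_nf

lemma parts_lemma {s : ℝ} (hs : 0 < s) :
    ∫ t in Ioi (0:ℝ), Real.exp (-t) * Real.log (1 + t/s)
      = ∫ t in Ioi (0:ℝ), Real.exp (-t) / (t + s) := by
  set g : ℝ → ℝ := fun t => Real.exp (-t) * Real.log (1 + t/s) with hg
  set h : ℝ → ℝ := fun t => Real.exp (-t) / (t + s) with hh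
  have hpos : ∀ t : ℝ, 0 ≤ t → (0:ℝ) < 1 + t/s := by
    intro t ht; have := div_nonneg ht hs.le; linarith
  have hderiv : ∀ t : ℝ, 0 ≤ t →
      HasDerivAt (fun t => -(Real.exp (-t) * Real.log (1 + t/s))) (g t - h t) t := by
    intro t ht
    have he : HasDerivAt (fun t : ℝ => Real.exp (-t)) (Real.exp (-t) * (-1)) t :=
      (hasDerivAt_neg t).exp
    have hu : HasDerivAt (fun t : ℝ => 1 + t/s) (1/s) t := by
      simpa using ((hasDerivAt_id t).div_const s).const_add 1
    have hl : HasDerivAt (fun t : ℝ => Real.log (1 + t/s)) (1/s / (1 + t/s)) t :=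
      hu.log (ne_of_gt (hpos t ht))
    have := (he.mul hl).neg
    refine this.congr_deriv ?_
    have h1 : (0:ℝ) < 1 + t/s := hpos t ht
    have h2 : t + s ≠ 0 := by positivity
    simp only [hg, hh]
    field_simp
    ring
  -- integrability of g
  have hg_nonneg : ∀ t ∈ Ioi (0:ℝ), 0 ≤ g t := by
    intro t ht
    have h1 : (1:ℝ) ≤ 1 + t/s := by
      have := div_nonneg (le_of_lt ht) hs.le; linarith
    exact mul_nonneg (Real.exp_pos _).le (Real.log_nonneg h1)
  have hg_bound : ∀ t ∈ Ioi (0:ℝ), g t ≤ s⁻¹ * Real.exp (-(1/2*t)) := by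
    intro t ht
    have ht' : (0:ℝ) ≤ t := le_of_lt ht
    have hlog : Real.log (1 + t/s) ≤ t/s := by
      have := Real.log_le_sub_one_of_pos (hpos t ht')
      linarith
    calc g t ≤ Real.exp (-t) * (t/s) :=
          mul_le_mul_of_nonneg_left hlog (Real.exp_pos _).le
      _ = s⁻¹ * (t * Real.exp (-t)) := by ring
      _ ≤ s⁻¹ * Real.exp (-(1/2*t)) := by
          have := texp_le ht'
          have hs' : (0:ℝ) ≤ s⁻¹ := by positivity
          exact mul_le_mul_of_nonneg_left this hs'
  have hg_cont : ContinuousOn g (Ioi (0:ℝ)) := by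
    apply ContinuousOn.mul (by fun_prop)
    apply ContinuousOn.log (by fun_prop)
    intro t ht
    exact ne_of_gt (hpos t (le_of_lt ht))
  have hbound_int : IntegrableOn (fun t => s⁻¹ * Real.exp (-(1/2*t))) (Ioi (0:ℝ)) := by
    apply Integrable.const_mul
    simpa [IntegrableOn] using exp_neg_integrableOn_Ioi (0:ℝ) (by norm_num : (0:ℝ) < 1/2)
  have hg_int : IntegrableOn g (Ioi (0:ℝ)) := by
    apply Integrable.mono' hbound_int (hg_cont.aestronglyMeasurable measurableSet_Ioi)
    filter_upwards [ae_restrict_mem measurableSet_Ioi] with t ht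
    rw [Real.norm_eq_abs, abs_of_nonneg (hg_nonneg t ht)]
    exact hg_bound t ht
  have hh_int : IntegrableOn h (Ioi (0:ℝ)) := by
    apply Integrable.mono' ((exp_neg_integrableOn_Ioi (0:ℝ) one_pos).const_mul s⁻¹)
      (((measurable_exp.comp measurable_neg).div
        (measurable_id.add_const s)).aestronglyMeasurable)
    filter_upwards [ae_restrict_mem measurableSet_Ioi] with t ht
    have ht' : (0:ℝ) < t := ht
    have hts : (0:ℝ) < t + s := by positivity
    show ‖h t‖ ≤ s⁻¹ * Real.exp (-1*t)
    rw [Real.norm_eq_abs, abs_of_nonneg (by positivity : (0:ℝ) ≤ h t)]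
    calc h t ≤ Real.exp (-t) / s := by
          apply div_le_div_of_nonneg_left (Real.exp_pos _).le hs; linarith
      _ = s⁻¹ * Real.exp (-1*t) := by rw [neg_one_mul]; ring
  have hfi : IntegrableOn (fun t => g t - h t) (Ioi (0:ℝ)) := hg_int.sub hh_int
  have htend : Tendsto (fun t => -(Real.exp (-t) * Real.log (1 + t/s))) atTop (𝓝 0) := by
    rw [← neg_zero]
    apply Tendsto.neg
    apply squeeze_zero' (g := fun t => s⁻¹ * Real.exp (-(1/2*t)))
    · filter_upwards [eventually_gt_atTop (0:ℝ)] with t ht using hg_nonneg t ht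
    · filter_upwards [eventually_gt_atTop (0:ℝ)] with t ht using hg_bound t ht
    · rw [← mul_zero (s⁻¹)]
      exact (Real.tendsto_exp_neg_atTop_nhds_zero.comp
        (tendsto_id.const_mul_atTop (by norm_num : (0:ℝ) < 1/2))).const_mul s⁻¹
  have key := integral_Ioi_of_hasDerivAt_of_tendsto
    (hderiv 0 le_rfl).continuousAt.continuousWithinAt
    (fun t ht => hderiv t (le_of_lt ht)) hfi htend
  have hF0 : -(Real.exp (-(0:ℝ)) * Real.log (1 + 0/s)) = 0 := by simp
  rw [hF0, sub_zero] at key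
  have := integral_sub hg_int hh_int
  rw [this] at key
  linarith

lemma subst_lemma {p x : ℝ} (hp : 0 < p) (hx : 0 < x) :
    ∫ w in Ioi (0:ℝ), x * Real.exp (-(p*w)) / (1 + x*w)
      = ∫ r in Ioi (0:ℝ), Real.exp (-r) / (r + p/x) := by
  have base := integral_comp_mul_left_Ioi (fun r => Real.exp (-r) / (r + p/x)) 0 hp
  simp only [mul_zero, smul_eq_mul] at base
  have key : EqOn (fun w => x * Real.exp (-(p*w)) / (1 + x*w))
      (fun w => p * (Real.exp (-(p*w)) / (p*w + p/x))) (Ioi (0:ℝ)) := by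
    intro w hw
    have hw' : (0:ℝ) < w := hw
    have h1 : (0:ℝ) < 1 + x*w := by positivity
    have h2 : (0:ℝ) < p*w + p/x := by positivity
    field_simp
    ring
  rw [setIntegral_congr_fun measurableSet_Ioi key, MeasureTheory.integral_const_mul, base, ← mul_assoc,
    mul_inv_cancel₀ hp.ne', one_mul]

end aux

theorem convexOn_exp_log_integral (a b : ℝ) (ha : 0 < a) (hb : 0 < b) :
    ConvexOn ℝ (Set.Icc 0 b)
      (fun ε : ℝ => ∫ t in Set.Ioi (0 : ℝ),
        Real.exp (-t) * Real.log (1 + a * (b - ε) * t / (1 + a * ε))) := by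
  set K : ℝ → ℝ → ℝ := fun ε w => (b - ε) * Real.exp (-((a⁻¹ + ε) * w)) / (1 + (b - ε) * w)
    with hK
  -- the integral identity
  have hEq : ∀ ε ∈ Icc (0:ℝ) b,
      (∫ t in Ioi (0:ℝ), Real.exp (-t) * Real.log (1 + a * (b - ε) * t / (1 + a * ε)))
        = ∫ w in Ioi (0:ℝ), K ε w := by
    intro ε hε
    obtain ⟨hε0, hεb⟩ := hε
    rcases eq_or_lt_of_le hεb with rfl | hlt
    · simp [hK]
    · have hx : (0:ℝ) < b - ε := by linarith
      have hp : (0:ℝ) < a⁻¹ + ε := by positivity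
      have hden : (0:ℝ) < 1 + a * ε := by positivity
      have hs : (0:ℝ) < (a⁻¹ + ε) / (b - ε) := by positivity
      have step1 : (∫ t in Ioi (0:ℝ), Real.exp (-t) * Real.log (1 + a * (b - ε) * t / (1 + a * ε)))
          = ∫ t in Ioi (0:ℝ), Real.exp (-t) * Real.log (1 + t / ((a⁻¹ + ε) / (b - ε))) := by
        apply setIntegral_congr_fun measurableSet_Ioi
        intro t ht
        have harg : a * (b - ε) * t / (1 + a * ε) = t / ((a⁻¹ + ε) / (b - ε)) := by
          rw [div_div_eq_mul_div]
          field_simp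
        simp only [harg]
      rw [step1, parts_lemma hs, ← subst_lemma hp hx]
  -- integrability of the kernel
  have hKcont : ∀ ε ∈ Icc (0:ℝ) b, ContinuousOn (K ε) (Ioi (0:ℝ)) := by
    intro ε hε
    apply ContinuousOn.div (by fun_prop) (by fun_prop)
    intro w hw
    have hw' : (0:ℝ) < w := hw
    have : (0:ℝ) ≤ (b - ε) * w := mul_nonneg (by linarith [hε.2]) hw'.le
    positivity
  have hKnonneg : ∀ ε ∈ Icc (0:ℝ) b, ∀ w ∈ Ioi (0:ℝ), 0 ≤ K ε w := by
    intro ε hε w hw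
    have hw' : (0:ℝ) < w := hw
    have h1 : (0:ℝ) ≤ b - ε := by linarith [hε.2]
    have h2 : (0:ℝ) ≤ (b - ε) * w := mul_nonneg h1 hw'.le
    have h3 : (0:ℝ) < 1 + (b - ε) * w := by linarith
    exact div_nonneg (mul_nonneg h1 (Real.exp_pos _).le) h3.le
  have hKint : ∀ ε ∈ Icc (0:ℝ) b, IntegrableOn (K ε) (Ioi (0:ℝ)) := by
    intro ε hε
    apply Integrable.mono'
      ((exp_neg_integrableOn_Ioi (0:ℝ) (inv_pos.mpr ha)).const_mul b)
      ((hKcont ε hε).aestronglyMeasurable measurableSet_Ioi)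
    filter_upwards [ae_restrict_mem measurableSet_Ioi] with w hw
    have hw' : (0:ℝ) < w := hw
    have h1 : (0:ℝ) ≤ b - ε := by linarith [hε.2]
    have h2 : (0:ℝ) ≤ (b - ε) * w := mul_nonneg h1 hw'.le
    have h3 : (1:ℝ) ≤ 1 + (b - ε) * w := by linarith
    rw [Real.norm_eq_abs, abs_of_nonneg (hKnonneg ε hε w hw)]
    calc K ε w ≤ (b - ε) * Real.exp (-((a⁻¹ + ε) * w)) := by
          apply div_le_self (mul_nonneg h1 (Real.exp_pos _).le) h3
      _ ≤ b * Real.exp (-a⁻¹ * w) := by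
          apply mul_le_mul (by linarith [hε.1]) ?_ (Real.exp_pos _).le hb.le
          apply Real.exp_le_exp.mpr
          nlinarith [hε.1]
  -- pointwise convexity of the kernel
  have hKphi : ∀ ε ∈ Icc (0:ℝ) b, ∀ w ∈ Ioi (0:ℝ),
      K ε w = Real.exp (-((a⁻¹ + b) * w)) / w
        * ((b - ε) * w * Real.exp ((b - ε) * w) / (1 + (b - ε) * w)) := by
    intro ε hε w hw
    have hw' : (0:ℝ) < w := hw
    have h1 : (0:ℝ) ≤ b - ε := by linarith [hε.2]
    have h2 : (0:ℝ) ≤ (b - ε) * w := mul_nonneg h1 hw'.le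
    have h3 : (0:ℝ) < 1 + (b - ε) * w := by linarith
    have hexp : Real.exp (-((a⁻¹ + ε) * w))
        = Real.exp (-((a⁻¹ + b) * w)) * Real.exp ((b - ε) * w) := by
      rw [← Real.exp_add]; ring_nf
    rw [hK]
    simp only
    rw [hexp]
    field_simp
  have hKconv : ∀ w ∈ Ioi (0:ℝ), ∀ ε₁ ∈ Icc (0:ℝ) b, ∀ ε₂ ∈ Icc (0:ℝ) b,
      ∀ p q : ℝ, 0 ≤ p → 0 ≤ q → p + q = 1 →
      K (p * ε₁ + q * ε₂) w ≤ p * K ε₁ w + q * K ε₂ w := by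
    intro w hw ε₁ h₁ ε₂ h₂ p q hp hq hpq
    have hw' : (0:ℝ) < w := hw
    have hmem : p * ε₁ + q * ε₂ ∈ Icc (0:ℝ) b :=
      (convex_Icc (0:ℝ) b) h₁ h₂ hp hq hpq
    have hy₁ : (b - ε₁) * w ∈ Ici (0:ℝ) := mul_nonneg (by linarith [h₁.2]) hw'.le
    have hy₂ : (b - ε₂) * w ∈ Ici (0:ℝ) := mul_nonneg (by linarith [h₂.2]) hw'.le
    have hphi := convexOn_phi.2 hy₁ hy₂ hp hq hpq
    simp only [smul_eq_mul] at hphi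
    have hcomb : p * ((b - ε₁) * w) + q * ((b - ε₂) * w)
        = (b - (p * ε₁ + q * ε₂)) * w := by linear_combination b * w * hpq
    rw [hcomb] at hphi
    have hC : (0:ℝ) ≤ Real.exp (-((a⁻¹ + b) * w)) / w := by positivity
    have := mul_le_mul_of_nonneg_left hphi hC
    rw [hKphi _ hmem w hw, hKphi _ h₁ w hw, hKphi _ h₂ w hw]
    calc Real.exp (-((a⁻¹ + b) * w)) / w
          * ((b - (p * ε₁ + q * ε₂)) * w * Real.exp ((b - (p * ε₁ + q * ε₂)) * w)
            / (1 + (b - (p * ε₁ + q * ε₂)) * w)) ≤ _ := this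
      _ = p * (Real.exp (-((a⁻¹ + b) * w)) / w
            * ((b - ε₁) * w * Real.exp ((b - ε₁) * w) / (1 + (b - ε₁) * w)))
          + q * (Real.exp (-((a⁻¹ + b) * w)) / w
            * ((b - ε₂) * w * Real.exp ((b - ε₂) * w) / (1 + (b - ε₂) * w))) := by ring
  -- assemble
  refine ⟨convex_Icc 0 b, ?_⟩
  intro ε₁ h₁ ε₂ h₂ p q hp hq hpq
  have hmem : p * ε₁ + q * ε₂ ∈ Icc (0:ℝ) b := (convex_Icc (0:ℝ) b) h₁ h₂ hp hq hpq
  simp only [smul_eq_mul]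
  rw [hEq _ h₁, hEq _ h₂, hEq _ hmem]
  have int₁ : IntegrableOn (fun w => p * K ε₁ w) (Ioi (0:ℝ)) := (hKint _ h₁).const_mul p
  have int₂ : IntegrableOn (fun w => q * K ε₂ w) (Ioi (0:ℝ)) := (hKint _ h₂).const_mul q
  calc (∫ w in Ioi (0:ℝ), K (p * ε₁ + q * ε₂) w)
      ≤ ∫ w in Ioi (0:ℝ), (p * K ε₁ w + q * K ε₂ w) := by
        apply setIntegral_mono_on (hKint _ hmem) (int₁.add int₂) measurableSet_Ioi
        intro w hw
        exact hKconv w hw ε₁ h₁ ε₂ h₂ p q hp hq hpq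
    _ = p * (∫ w in Ioi (0:ℝ), K ε₁ w) + q * (∫ w in Ioi (0:ℝ), K ε₂ w) := by
        rw [integral_add int₁ int₂, integral_const_mul, integral_const_mul]
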